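/- With J_{k,i}(0,x,q) = ∑_{n≥0} (-1)^n x^{kn} q^{kn+kn^2+n−in+C(n,2)} (1 − x^i q^{i+2ni}) / ((q)_n (xq^{n+1})_∞), the specialization x ↦ q^j (j ≥ 0) satisfies: J_{k,k-i+1}(0,q^j,q) = [∑_{n≥0} (-1)^n q^{(2k+1)·C(n,2)+(k(j+1)+i)n}(1−q^{n+1})⋯(1−q^{n+j})(1−q^{(k-i+1)(2n+j+1)})] / (q)_∞, for 1 ≤ i ≤ k. -/

import Mathlib

open PowerSeries Finset

/-- Truncation-based formal infinite product `∏_{m, P m} (1 - q^m)` in `ℚ⟦q⟧`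
(valid when `P m → 1 ≤ m`). -/
noncomputable def sProd (P : ℕ → Prop) [DecidablePred P] : PowerSeries ℚ :=
  PowerSeries.mk fun d =>
    PowerSeries.coeff d (∏ m ∈ (Finset.range (d + 1)).filter P, (1 - PowerSeries.X ^ m))

/-- Truncation-based formal infinite sum `∑_{n ≥ 0} f n` in `ℚ⟦q⟧`
(valid when the order of `f n` is at least `n`). -/
noncomputable def sSum (f : ℕ → PowerSeries ℚ) : PowerSeries ℚ :=
  PowerSeries.mk fun d =>
    PowerSeries.coeff d (∑ n ∈ Finset.range (d + 1), f n)

lemma coeff_mul_prod_eq (b : ℕ) (A : PowerSeries ℚ) (S : Finset ℕ)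
    (h : ∀ m ∈ S, b < m) :
    PowerSeries.coeff b (A * ∏ m ∈ S, (1 - PowerSeries.X ^ m)) = PowerSeries.coeff b A := by
  classical
  induction S using Finset.induction_on with
  | empty => simp
  | @insert a S ha ih =>
    rw [Finset.prod_insert ha,
      show A * ((1 - PowerSeries.X ^ a) * ∏ m ∈ S, (1 - PowerSeries.X ^ m)) =
        A * ∏ m ∈ S, (1 - PowerSeries.X ^ m)
          - (A * ∏ m ∈ S, (1 - PowerSeries.X ^ m)) * PowerSeries.X ^ a by ring,
      map_sub, PowerSeries.coeff_mul_X_pow',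
      if_neg (by exact not_le.mpr (h a (Finset.mem_insert_self a S))), sub_zero,
      ih fun m hm => h m (Finset.mem_insert_of_mem hm)]

lemma sProd_coeff (P : ℕ → Prop) [DecidablePred P] (d M : ℕ) (h : d ≤ M) :
    PowerSeries.coeff d (sProd P) =
      PowerSeries.coeff d (∏ m ∈ (Finset.range (M + 1)).filter P, (1 - PowerSeries.X ^ m)) := by
  rw [sProd, PowerSeries.coeff_mk]
  have hset : (Finset.range (M + 1)).filter P =
      (Finset.range (d + 1)).filter P ∪ (Finset.Ico (d + 1) (M + 1)).filter P := by
    rw [← Finset.filter_union]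
    congr 1
    rw [Finset.range_eq_Ico, Finset.range_eq_Ico, Finset.Ico_union_Ico_eq_Ico (by omega) (by omega)]
  have hdisj : Disjoint ((Finset.range (d + 1)).filter P)
      ((Finset.Ico (d + 1) (M + 1)).filter P) := by
    rw [Finset.disjoint_left]
    intro m hm1 hm2
    simp only [Finset.mem_filter, Finset.mem_range, Finset.mem_Ico] at hm1 hm2
    omega
  rw [hset, Finset.prod_union hdisj, coeff_mul_prod_eq]
  intro m hm
  simp only [Finset.mem_filter, Finset.mem_Ico] at hm
  omega

lemma filter_le_range (a d : ℕ) :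
    (Finset.range (d + 1)).filter (fun m => a ≤ m) = Finset.Icc a d := by
  ext m; simp only [Finset.mem_filter, Finset.mem_range, Finset.mem_Icc]; omega

lemma sProd_split (N : ℕ) :
    sProd (fun m => 1 ≤ m) =
      (∏ t ∈ Finset.Icc 1 N, (1 - PowerSeries.X ^ t)) * sProd (fun m => N + 1 ≤ m) := by
  ext d
  rw [PowerSeries.coeff_mul]
  have step : ∀ p ∈ Finset.HasAntidiagonal.antidiagonal d,
      PowerSeries.coeff p.1 (∏ t ∈ Finset.Icc 1 N, (1 - PowerSeries.X ^ t)) *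
        PowerSeries.coeff p.2 (sProd (fun m => N + 1 ≤ m)) =
      PowerSeries.coeff p.1 (∏ t ∈ Finset.Icc 1 N, (1 - PowerSeries.X ^ t)) *
        PowerSeries.coeff p.2 (∏ m ∈ Finset.Icc (N + 1) d, (1 - PowerSeries.X ^ m)) := by
    intro p hp
    have hpd : p.2 ≤ d := by
      have := Finset.HasAntidiagonal.mem_antidiagonal.mp hp; omega
    rw [sProd_coeff _ p.2 d hpd, filter_le_range]
  rw [Finset.sum_congr rfl step, ← PowerSeries.coeff_mul, sProd, PowerSeries.coeff_mk,
    filter_le_range]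
  by_cases hNd : N ≤ d
  · have huni : Finset.Icc 1 N ∪ Finset.Icc (N + 1) d = Finset.Icc 1 d := by
      ext m; simp only [Finset.mem_union, Finset.mem_Icc]; omega
    have hdisj : Disjoint (Finset.Icc 1 N) (Finset.Icc (N + 1) d) := by
      rw [Finset.disjoint_left]; intro m h1 h2
      simp only [Finset.mem_Icc] at h1 h2; omega
    rw [← Finset.prod_union hdisj, huni]
  · have hempty : Finset.Icc (N + 1) d = ∅ := by
      rw [Finset.Icc_eq_empty]; omega
    rw [hempty, Finset.prod_empty, mul_one]
    have huni : Finset.Icc 1 d ∪ Finset.Icc (d + 1) N = Finset.Icc 1 N := by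
      ext m; simp only [Finset.mem_union, Finset.mem_Icc]; omega
    have hdisj : Disjoint (Finset.Icc 1 d) (Finset.Icc (d + 1) N) := by
      rw [Finset.disjoint_left]; intro m h1 h2
      simp only [Finset.mem_Icc] at h1 h2; omega
    rw [← huni, Finset.prod_union hdisj, coeff_mul_prod_eq]
    intro m hm
    simp only [Finset.mem_Icc] at hm; omega


lemma mul_sSum (c : PowerSeries ℚ) (f : ℕ → PowerSeries ℚ)
    (hf : ∀ n d, d < n → PowerSeries.coeff d (f n) = 0) :
    c * sSum f = sSum (fun n => c * f n) := by
  ext d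
  have L : PowerSeries.coeff d (c * sSum f) =
      ∑ p ∈ Finset.HasAntidiagonal.antidiagonal d, PowerSeries.coeff p.1 c *
        ∑ n ∈ Finset.range (d + 1), PowerSeries.coeff p.2 (f n) := by
    rw [PowerSeries.coeff_mul]
    refine Finset.sum_congr rfl fun p hp => ?_
    congr 1
    rw [sSum, PowerSeries.coeff_mk, map_sum]
    refine Finset.sum_subset ?_ ?_
    · intro x hx
      simp only [Finset.mem_range] at hx ⊢
      have := Finset.HasAntidiagonal.mem_antidiagonal.mp hp
      omega
    · intro n _ hn2
      simp only [Finset.mem_range, not_lt] at hn2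
      exact hf n p.2 (by omega)
  have R : PowerSeries.coeff d (sSum fun n => c * f n) =
      ∑ n ∈ Finset.range (d + 1), ∑ p ∈ Finset.HasAntidiagonal.antidiagonal d,
        PowerSeries.coeff p.1 c * PowerSeries.coeff p.2 (f n) := by
    rw [sSum, PowerSeries.coeff_mk, map_sum]
    exact Finset.sum_congr rfl fun n _ => PowerSeries.coeff_mul d c (f n)
  rw [L, R, Finset.sum_comm]
  exact Finset.sum_congr rfl fun p _ => Finset.mul_sum _ _ _

lemma constCoeff_prod_one_sub (S : Finset ℕ) (h : 0 ∉ S) :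
    PowerSeries.constantCoeff (R := ℚ) (∏ m ∈ S, (1 - PowerSeries.X ^ m)) = 1 := by
  rw [map_prod]
  refine Finset.prod_eq_one fun m hm => ?_
  have hm0 : m ≠ 0 := fun e => h (e ▸ hm)
  simp [zero_pow hm0]

lemma constCoeff_sProd (P : ℕ → Prop) [DecidablePred P] (h : ¬ P 0) :
    PowerSeries.constantCoeff (sProd P) = 1 := by
  have : PowerSeries.coeff 0 (sProd P) = 1 := by
    rw [sProd, PowerSeries.coeff_mk]
    have : (Finset.range 1).filter P = ∅ := by
      ext m
      simp only [Finset.mem_filter, Finset.mem_range, Finset.notMem_empty, iff_false, not_and]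
      intro hm
      interval_cases m
      exact h
    rw [this, Finset.prod_empty]
    simp
  rwa [PowerSeries.coeff_zero_eq_constantCoeff] at this

lemma sProd_congr {P Q : ℕ → Prop} [DecidablePred P] [DecidablePred Q]
    (h : ∀ m, P m ↔ Q m) : sProd P = sProd Q := by
  unfold sProd
  exact congrArg PowerSeries.mk (funext fun d => by
    rw [Finset.filter_congr (q := Q) fun x _ => h x])

lemma inv_key (n j : ℕ) :
    (∏ t ∈ Finset.Icc 1 n, (1 - PowerSeries.X ^ t))⁻¹ *
      (sProd (fun m => j + n + 1 ≤ m))⁻¹ =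
    (sProd (fun m => 1 ≤ m))⁻¹ * ∏ t ∈ Finset.Icc 1 j, (1 - PowerSeries.X ^ (n + t)) := by
  have hG' : (∏ t ∈ Finset.Icc 1 j, ((1 : PowerSeries ℚ) - PowerSeries.X ^ (n + t))) =
      ∏ t ∈ Finset.Icc (n + 1) (n + j), ((1 : PowerSeries ℚ) - PowerSeries.X ^ t) := by
    rw [← Finset.map_add_left_Icc 1 j n, Finset.prod_map]
    rfl
  have hQ : sProd (fun m => j + n + 1 ≤ m) = sProd (fun m => n + j + 1 ≤ m) :=
    sProd_congr fun m => by omega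
  set F := ∏ t ∈ Finset.Icc 1 n, ((1 : PowerSeries ℚ) - PowerSeries.X ^ t) with hF
  set G := ∏ t ∈ Finset.Icc (n + 1) (n + j), ((1 : PowerSeries ℚ) - PowerSeries.X ^ t) with hG
  set H := sProd (fun m => n + j + 1 ≤ m) with hH
  have hFG : (∏ t ∈ Finset.Icc 1 (n + j), ((1 : PowerSeries ℚ) - PowerSeries.X ^ t)) = F * G := by
    rw [hF, hG, Finset.Icc_add_one_left_eq_Ioc, show (1:ℕ) = 0 + 1 from rfl, Finset.Icc_add_one_left_eq_Ioc, Finset.Icc_add_one_left_eq_Ioc,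
      ← Finset.prod_Ioc_consecutive _ (Nat.zero_le n) (Nat.le_add_right n j)]
  have hsplit : sProd (fun m => 1 ≤ m) = F * (G * H) := by
    rw [sProd_split (n + j), hFG, mul_assoc]
  have hGne : PowerSeries.constantCoeff G ≠ 0 := by
    rw [hG, constCoeff_prod_one_sub _ (by simp)]
    exact one_ne_zero
  rw [hQ, hG', hsplit, PowerSeries.mul_inv_rev, PowerSeries.mul_inv_rev,
    show H⁻¹ * G⁻¹ * F⁻¹ * G = G⁻¹ * G * (F⁻¹ * H⁻¹) by ring,
    PowerSeries.inv_mul_cancel G hGne, one_mul]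

lemma two_mul_choose_two (n : ℕ) : 2 * n.choose 2 = n * (n - 1) := by
  rw [Nat.choose_two_right, Nat.mul_div_cancel']
  exact (Nat.even_mul_pred_self n).two_dvd

lemma sq_eq_choose (n : ℕ) : n ^ 2 = 2 * n.choose 2 + n := by
  rw [two_mul_choose_two]
  cases n with
  | zero => rfl
  | succ m => rw [Nat.succ_sub_one]; ring

/-- Andrews's `J_{k,i}(0, x, q)` specialized at `x = q^j` (`1 ≤ i ≤ k`):
`J_{k,i}(0,q^j,q) = ∑_{n ≥ 0} (-1)^n q^{jkn} q^{kn+kn²+n-in+C(n,2)}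
  (1 - q^{i(j+1)+2ni}) / ((q)_n (q^{j+n+1})_∞)`,
where the exponent `kn+kn²+n-in+C(n,2)` is expressed with the (nonnegative)
natural-number subtraction `kn+kn²+n+C(n,2) - in`, valid since `i ≤ k`. -/
noncomputable def Jspec (k i j : ℕ) : PowerSeries ℚ :=
  sSum (fun n =>
    (-1 : PowerSeries ℚ) ^ n *
    PowerSeries.X ^ (j * k * n + (k * n + k * n ^ 2 + n + n.choose 2 - i * n)) *
    (1 - PowerSeries.X ^ (i * (j + 1) + 2 * n * i)) *
    (∏ t ∈ Finset.Icc 1 n, (1 - PowerSeries.X ^ t))⁻¹ *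
    (sProd (fun m => j + n + 1 ≤ m))⁻¹)

/-- The dictionary between Andrews's specialized `J`-functions and the
Lepowsky–Zhu closed forms:
`J_{k,k-i+1}(0,q^j,q) = [∑_{n ≥ 0} (-1)^n q^{(2k+1)C(n,2)+(k(j+1)+i)n}
  (1-q^{n+1})⋯(1-q^{n+j}) (1-q^{(k-i+1)(2n+j+1)})] / (q)_∞`. -/
theorem Jspec_dictionary (k i j : ℕ) (hk : 2 ≤ k) (hi1 : 1 ≤ i) (hik : i ≤ k) :
    Jspec k (k - i + 1) j =
      (sProd (fun m => 1 ≤ m))⁻¹ * sSum (fun n =>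
        (-1 : PowerSeries ℚ) ^ n *
        PowerSeries.X ^ ((2 * k + 1) * n.choose 2 + (k * (j + 1) + i) * n) *
        (∏ t ∈ Finset.Icc 1 j, (1 - PowerSeries.X ^ (n + t))) *
        (1 - PowerSeries.X ^ ((k - i + 1) * (2 * n + j + 1)))) := by
  have hord : ∀ n d : ℕ, d < n →
      PowerSeries.coeff d ((-1 : PowerSeries ℚ) ^ n *
        PowerSeries.X ^ ((2 * k + 1) * n.choose 2 + (k * (j + 1) + i) * n) *
        (∏ t ∈ Finset.Icc 1 j, (1 - PowerSeries.X ^ (n + t))) *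
        (1 - PowerSeries.X ^ ((k - i + 1) * (2 * n + j + 1)))) = 0 := by
    intro n d hd
    have hne : n ≤ (2 * k + 1) * n.choose 2 + (k * (j + 1) + i) * n := by
      calc n = 1 * n := (one_mul n).symm
        _ ≤ (k * (j + 1) + i) * n := Nat.mul_le_mul_right n (by omega)
        _ ≤ _ := Nat.le_add_left _ _
    have hdvd : (PowerSeries.X : PowerSeries ℚ) ^ n ∣
        ((-1 : PowerSeries ℚ) ^ n *
        PowerSeries.X ^ ((2 * k + 1) * n.choose 2 + (k * (j + 1) + i) * n) *
        (∏ t ∈ Finset.Icc 1 j, (1 - PowerSeries.X ^ (n + t))) *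
        (1 - PowerSeries.X ^ ((k - i + 1) * (2 * n + j + 1)))) := by
      apply Dvd.dvd.mul_right
      apply Dvd.dvd.mul_right
      exact Dvd.dvd.mul_left (pow_dvd_pow _ hne) _
    exact PowerSeries.X_pow_dvd_iff.mp hdvd d hd
  rw [Jspec, mul_sSum _ _ hord]
  refine congrArg sSum (funext fun n => ?_)
  have hE : j * k * n + (k * n + k * n ^ 2 + n + n.choose 2 - (k - i + 1) * n)
      = (2 * k + 1) * n.choose 2 + (k * (j + 1) + i) * n := by
    obtain ⟨a, rfl⟩ : ∃ a, k = a + i := ⟨k - i, by omega⟩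
    obtain ⟨b, rfl⟩ : ∃ b, i = b + 1 := ⟨i - 1, by omega⟩
    have h1 : a + (b + 1) - (b + 1) + 1 = a + 1 := by omega
    have h2 : (a + (b + 1)) * n + (a + (b + 1)) * n ^ 2 + n + n.choose 2
        = (a + 1) * n + (b * n + (a + (b + 1)) * n ^ 2 + n + n.choose 2) := by ring
    rw [h1, h2, Nat.add_sub_cancel_left, sq_eq_choose n]
    ring
  have hA : (k - i + 1) * (j + 1) + 2 * n * (k - i + 1) = (k - i + 1) * (2 * n + j + 1) := by
    generalize k - i + 1 = c
    ring
  rw [hE, hA]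
  have hkey := inv_key n j
  linear_combination ((-1 : PowerSeries ℚ) ^ n *
    PowerSeries.X ^ ((2 * k + 1) * n.choose 2 + (k * (j + 1) + i) * n) *
    (1 - PowerSeries.X ^ ((k - i + 1) * (2 * n + j + 1)))) * hkey
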